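/- Let θ be irrational with 0 < 2km − m²θ < 1/2 for positive coprime integers 2k, m (so θ < 2k/m). If the inequalities (4mA − 2k)/(4mB − m) < r/s < θ hold (with A, B, r, s as in the construction), then t := m(A − Bθ) satisfies 0 < t < 1. -/

import Mathlib

set_option maxHeartbeats 1000000


theorem stmt17 (k m n s r A B : ℤ) (hk : 1 ≤ k) (hm : 1 ≤ m)
    (hn : n = 4*m*k + 1) (hs : s = n^2 + 4*m^2)
    (hr : r = 4*k^2*(2*n+1) + 2*n - 3)
    (hA : A = 64*k^3*m + 8*k*m + 24*k^2 - 1)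
    (hB : B = 2*(16*k^2*m^2 + 8*k*m + 2*m^2 + 1))
    (θ : ℝ) (hθ : Irrational θ)
    (hcop : IsCoprime (2*k) m)
    (hpos : 0 < 2*(k:ℝ)*m - (m:ℝ)^2*θ)
    (hhalf : 2*(k:ℝ)*m - (m:ℝ)^2*θ < 1/2)
    (h1 : (4*(m:ℝ)*A - 2*k)/(4*(m:ℝ)*B - m) < (r:ℝ)/s)
    (h2 : (r:ℝ)/s < θ)
    (h3 : θ < ((r:ℝ)*s + 1/2)/(s:ℝ)^2) :
    0 < (m:ℝ)*((A:ℝ) - (B:ℝ)*θ)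
    ∧ (m:ℝ)*((A:ℝ) - (B:ℝ)*θ) < (1/4)*(2*(k:ℝ) - (m:ℝ)*θ)
    ∧ (1/4)*(2*(k:ℝ) - (m:ℝ)*θ) < 1 := by
  have hkR : (1:ℝ) ≤ (k:ℝ) := by exact_mod_cast hk
  have hmR : (1:ℝ) ≤ (m:ℝ) := by exact_mod_cast hm
  subst hn hs hr hA hB
  have hsR : ((((4*m*k+1)^2 + 4*m^2 : ℤ)):ℝ) = (4*(m:ℝ)*(k:ℝ)+1)^2 + 4*(m:ℝ)^2 := by
    push_cast; ring
  have hBR : (((2*(16*k^2*m^2 + 8*k*m + 2*m^2 + 1) : ℤ)):ℝ)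
      = 2*(16*(k:ℝ)^2*(m:ℝ)^2 + 8*(k:ℝ)*(m:ℝ) + 2*(m:ℝ)^2 + 1) := by push_cast; ring
  have hrR : (((4*k^2*(2*(4*m*k+1)+1) + 2*(4*m*k+1) - 3 : ℤ)):ℝ)
      = 4*(k:ℝ)^2*(2*(4*(m:ℝ)*(k:ℝ)+1)+1) + 2*(4*(m:ℝ)*(k:ℝ)+1) - 3 := by push_cast; ring
  have hAR : (((64*k^3*m + 8*k*m + 24*k^2 - 1 : ℤ)):ℝ)
      = 64*(k:ℝ)^3*(m:ℝ) + 8*(k:ℝ)*(m:ℝ) + 24*(k:ℝ)^2 - 1 := by push_cast; ring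
  rw [hsR, hrR, hAR, hBR] at h1
  rw [hsR, hrR] at h2 h3
  rw [hAR, hBR]
  set K := (k:ℝ)
  set M := (m:ℝ)
  set S : ℝ := (4*M*K+1)^2 + 4*M^2 with hS
  set Rr : ℝ := 4*K^2*(2*(4*M*K+1)+1) + 2*(4*M*K+1) - 3 with hRr
  set Aa : ℝ := 64*K^3*M + 8*K*M + 24*K^2 - 1 with hAa
  set Bb : ℝ := 2*(16*K^2*M^2 + 8*K*M + 2*M^2 + 1) with hBb
  clear_value K M S Rr Aa Bb
  have hspos : (0:ℝ) < S := by rw [hS]; positivity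
  have hBpos : (0:ℝ) < Bb := by rw [hBb]; nlinarith
  have hDpos : (0:ℝ) < 4*M*Bb - M := by rw [hBb]; nlinarith
  have hkey : 2*Aa*S^2 - 2*Bb*Rr*S - Bb = 4*M^2 := by
    rw [hAa, hBb, hRr, hS]; ring
  have hθA : Bb*θ < Aa := by
    have h3' : θ*S^2 < Rr*S + 1/2 := by
      rw [lt_div_iff₀ (by positivity)] at h3
      linarith
    nlinarith [mul_lt_mul_of_pos_left h3' hBpos, sq_nonneg M, mul_pos hspos hspos]
  have hMpos : (0:ℝ) < M := by linarith
  have hApos : 0 < M*(Aa - Bb*θ) := by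
    have h : 0 < Aa - Bb*θ := by linarith
    positivity
  refine ⟨hApos, ?_, ?_⟩
  · have h1' : (4*M*Aa - 2*K)*S < Rr*(4*M*Bb - M) := by
      rw [div_lt_div_iff₀ hDpos hspos] at h1
      linarith
    have h2' : Rr < θ*S := by
      rw [div_lt_iff₀ hspos] at h2
      linarith
    have hmulS : (4*M*Aa - 2*K)*S < ((4*M*Bb - M)*θ)*S := by
      nlinarith [mul_lt_mul_of_pos_left h2' hDpos]
    have hfin : 4*M*Aa - 2*K < (4*M*Bb - M)*θ := lt_of_mul_lt_mul_right hmulS hspos.le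
    nlinarith [hfin, hMpos]
  · have h2k : (0:ℝ) < 2*K - M*θ := by nlinarith [hpos, hMpos]
    nlinarith [mul_nonneg (sub_nonneg.mpr hmR) h2k.le, hhalf]
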